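/- Let 𝒦₁ and 𝒦₂ be integral connectivity structures on a finite nonempty set I, and let φ, ψ be random families on I with 𝒦₁ ⊆ K_φ ⊆ 𝒦₂ and 𝒦₁ ⊆ K_ψ ⊆ 𝒦₂. Then 𝒦₁ ⊆ K_{φ⊗ψ} ⊆ 𝒦₂. -/

import Mathlib

universe u

variable {I : Type u}

/-- `{J₁, J₂}` is a dissociation of `J ⊆ I`: an (unordered) pair of nonempty
disjoint subsets whose union is `J`. -/
def IsDissociation (J J1 J2 : Set I) : Prop :=
  J1.Nonempty ∧ J2.Nonempty ∧ Disjoint J1 J2 ∧ J1 ∪ J2 = J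

/-- `A` contests the dissociation `{J₁, J₂}`. -/
def Contests (A J1 J2 : Set I) : Prop :=
  A ⊆ J1 ∪ J2 ∧ (A ∩ J1).Nonempty ∧ (A ∩ J2).Nonempty

/-- An integral connectivity structure on `I`. -/
def IsConnectivity (𝒦 : Set (Set I)) : Prop :=
  ∅ ∈ 𝒦 ∧ (∀ i : I, ({i} : Set I) ∈ 𝒦) ∧
    ∀ K L : Set I, K ∈ 𝒦 → L ∈ 𝒦 → (K ∩ L).Nonempty → K ∪ L ∈ 𝒦

/-- The integral connectivity structure generated by `𝒜`. -/
def generated (𝒜 : Set (Set I)) : Set (Set I) :=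
  ⋂₀ {𝒦 : Set (Set I) | IsConnectivity 𝒦 ∧ 𝒜 ⊆ 𝒦}

/-- The set `𝒦̃` of irreducible members of `𝒦` with at least two elements. -/
def irred (𝒦 : Set (Set I)) : Set (Set I) :=
  {K | K ∈ 𝒦 ∧ K ∉ generated (𝒦 \ {K}) ∧ 2 ≤ K.ncard}

/-- The sum of two integral connectivity structures: `𝒦₁ ⊕ 𝒦₂ = [𝒦₁ ∪ 𝒦₂]`. -/
def csum (𝒦₁ 𝒦₂ : Set (Set I)) : Set (Set I) := generated (𝒦₁ ∪ 𝒦₂)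

/-- The discrete integral connectivity structure on `I`. -/
def discreteStructure (I : Type u) : Set (Set I) :=
  {(∅ : Set I)} ∪ {A : Set I | ∃ i : I, A = {i}}

/-- `C` is a connected component of `(I, 𝒦)`: a maximal member of `𝒦`. -/
def IsComponent (𝒦 : Set (Set I)) (C : Set I) : Prop :=
  C ∈ 𝒦 ∧ ∀ K ∈ 𝒦, C ⊆ K → K = C

/-- `Γ_𝒜`: subsets of `I` all of whose dissociations are contested by a member of `𝒜`. -/
def Gamma (𝒜 : Set (Set I)) : Set (Set I) :=
  {B | ∀ J1 J2 : Set I, IsDissociation B J1 J2 → ∃ A ∈ 𝒜, Contests A J1 J2}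

/-- A random family on `I`: a finite probability space together with finitely
valued random variables indexed by `I`. -/
structure RandomFamily (I : Type u) where
  Ω : Type
  [fintΩ : Fintype Ω]
  P : Ω → ℝ
  P_nonneg : ∀ ω, 0 ≤ P ω
  P_total : ∑ ω, P ω = 1
  R : I → Type
  [fintR : ∀ i, Fintype (R i)]
  X : ∀ i, Ω → R i

attribute [instance] RandomFamily.fintΩ RandomFamily.fintR

/-- Probability of an event. -/
noncomputable def RandomFamily.prob (φ : RandomFamily I) (E : Set φ.Ω) : ℝ :=
  ∑ ω, E.indicator φ.P ω

/-- `P(X_J = x_J)`. -/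
noncomputable def RandomFamily.probEq (φ : RandomFamily I) (J : Set I)
    (x : ∀ i, φ.R i) : ℝ :=
  φ.prob {ω | ∀ j ∈ J, φ.X j ω = x j}

/-- `φ` respects the dissociation `{J₁, J₂}`:
`P(X_{J₁∪J₂} = x) = P(X_{J₁} = x) · P(X_{J₂} = x)` for all tuples of values. -/
def RandomFamily.Respects (φ : RandomFamily I) (J1 J2 : Set I) : Prop :=
  ∀ x : ∀ i, φ.R i, φ.probEq (J1 ∪ J2) x = φ.probEq J1 x * φ.probEq J2 x

/-- The connectivity structure `K_φ` of a random family: the subsets `J ⊆ I`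
such that `φ` contests every dissociation of `J`. -/
def RandomFamily.Kconn (φ : RandomFamily I) : Set (Set I) :=
  {J | ∀ J1 J2 : Set I, IsDissociation J J1 J2 → ¬ φ.Respects J1 J2}

/-- Tensor product of two random families. -/
noncomputable def RandomFamily.tensor (φ ψ : RandomFamily I) : RandomFamily I where
  Ω := φ.Ω × ψ.Ω
  fintΩ := inferInstance
  P := fun p => φ.P p.1 * ψ.P p.2
  P_nonneg := fun p => mul_nonneg (φ.P_nonneg _) (ψ.P_nonneg _)
  P_total := by
    rw [Fintype.sum_prod_type]
    simp only [← Finset.mul_sum]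
    rw [ψ.P_total]
    simp only [mul_one]
    exact φ.P_total
  R := fun i => φ.R i × ψ.R i
  fintR := fun i => inferInstance
  X := fun i p => (φ.X i p.1, ψ.X i p.2)

/-- Restriction of a random family to a subset `J ⊆ I`. -/
def RandomFamily.restrict (φ : RandomFamily I) (J : Set I) : RandomFamily J where
  Ω := φ.Ω
  fintΩ := inferInstance
  P := φ.P
  P_nonneg := φ.P_nonneg
  P_total := φ.P_total
  R := fun j => φ.R (j : I)
  fintR := fun j => inferInstance
  X := fun j => φ.X (j : I)

/-- The canonical `M`-brunnian family on `I`, for `M` of cardinality `m`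
(with elements listed in increasing order). -/
noncomputable def brunnian [LinearOrder I] (M : Finset I) (m : ℕ) (h : M.card = m) :
    RandomFamily I where
  Ω := Fin (m - 1) → ZMod 2
  fintΩ := inferInstance
  P := fun _ => ((2 : ℝ) ^ (m - 1))⁻¹
  P_nonneg := fun _ => by positivity
  P_total := by
    have hcard : Fintype.card (Fin (m - 1) → ZMod 2) = 2 ^ (m - 1) := by
      rw [Fintype.card_fun]
      simp
    rw [Finset.sum_const, Finset.card_univ, hcard, nsmul_eq_mul]
    push_cast
    exact mul_inv_cancel₀ (by positivity)
  R := fun _ => ZMod 2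
  fintR := fun _ => inferInstance
  X := fun i ω =>
    if hi : i ∈ M then
      if hk : (((M.orderIsoOfFin h).symm ⟨i, hi⟩ : Fin m) : ℕ) < m - 1 then
        ω ⟨_, hk⟩
      else ∑ j, ω j
    else 0

set_option linter.unusedSectionVars false
set_option maxHeartbeats 1000000

open scoped Classical

section Abstract
variable {I : Type u} [Fintype I] {R : I → Type} [∀ i, Fintype (R i)]

noncomputable def eind (J : Set I) (x y : ∀ i, R i) : ℝ :=
  if ∀ j ∈ J, y j = x j then 1 else 0

noncomputable def gg (ν : (∀ i, R i) → ℝ) (J : Set I) (x : ∀ i, R i) : ℝ :=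
  ∑ y, ν y * eind J x y

lemma eind_empty (x y : ∀ i, R i) : eind (∅ : Set I) x y = 1 := by
  simp [eind]

lemma eind_union (A B : Set I) (x y : ∀ i, R i) :
    eind (A ∪ B) x y = eind A x y * eind B x y := by
  unfold eind
  split_ifs with h1 h2 h3 h4 h5 <;>
    simp_all [Set.mem_union] <;> tauto

lemma eind_congr_left {J : Set I} {x x' : ∀ i, R i} (h : ∀ j ∈ J, x j = x' j)
    (y : ∀ i, R i) : eind J x y = eind J x' y := by
  unfold eind
  have : (∀ j ∈ J, y j = x j) ↔ (∀ j ∈ J, y j = x' j) := by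
    constructor <;> intro hh j hj <;> rw [hh j hj] <;> [exact h j hj; exact (h j hj).symm]
  simp [this]

noncomputable def patch (B : Set I) (d y : ∀ i, R i) : ∀ i, R i :=
  fun i => if i ∈ B then y i else d i

lemma patch_idem (B : Set I) (d y : ∀ i, R i) : patch B d (patch B d y) = patch B d y := by
  funext i; unfold patch; split_ifs <;> rfl

lemma eind_patch {C B : Set I} (hCB : C ⊆ B) (d x y : ∀ i, R i) :
    eind C x (patch B d y) = eind C x y := by
  unfold eind patch
  have : (∀ j ∈ C, (if j ∈ B then y j else d j) = x j) ↔ ∀ j ∈ C, y j = x j := by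
    constructor <;> intro hh j hj <;> have := hh j hj <;> simp [hCB hj] at this ⊢ <;> exact this
  simp [this]

lemma gg_congr {ν : (∀ i, R i) → ℝ} {J : Set I} {x x' : ∀ i, R i}
    (h : ∀ j ∈ J, x j = x' j) : gg ν J x = gg ν J x' := by
  unfold gg; exact Finset.sum_congr rfl fun y _ => by rw [eind_congr_left h]

lemma gg_empty {ν : (∀ i, R i) → ℝ} (hsum : ∑ y, ν y = 1) (x : ∀ i, R i) :
    gg ν (∅ : Set I) x = 1 := by
  unfold gg; simp [eind_empty, hsum]

/-- key counting lemma -/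
lemma sum_patch_pair (d : ∀ i, R i) {J1 J2 : Set I} (hd : Disjoint J1 J2) (z z' : ∀ i, R i) :
    ∑ y : ∀ i, R i, (if y = patch (J1 ∪ J2) d y then (1:ℝ) else 0) *
      (eind J1 y z * eind J2 y z') = 1 := by
  set y₀ : ∀ i, R i := fun i => if i ∈ J1 then z i else if i ∈ J2 then z' i else d i with hy₀
  have key : ∀ y : ∀ i, R i,
      (y = patch (J1 ∪ J2) d y ∧ (∀ j ∈ J1, z j = y j) ∧ (∀ j ∈ J2, z' j = y j)) ↔ y = y₀ := by
    intro y
    constructor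
    · rintro ⟨h0, hz, hz'⟩
      funext i
      by_cases hi1 : i ∈ J1
      · simp [hy₀, hi1, (hz i hi1).symm]
      · by_cases hi2 : i ∈ J2
        · simp [hy₀, hi1, hi2, (hz' i hi2).symm]
        · have := congrFun h0 i
          simp [patch, hi1, hi2] at this
          simp [hy₀, hi1, hi2, this]
    · rintro rfl
      refine ⟨?_, ?_, ?_⟩
      · funext i
        by_cases hi : i ∈ J1 ∪ J2
        · simp [patch, hi]
        · simp only [Set.mem_union, not_or] at hi
          simp [patch, hy₀, hi.1, hi.2, Set.mem_union, hi]
      · intro j hj; simp [hy₀, hj]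
      · intro j hj
        have : j ∉ J1 := fun hj1 => (Set.disjoint_left.mp hd hj1) hj
        simp [hy₀, this, hj]
  have step : ∀ y : ∀ i, R i,
      (if y = patch (J1 ∪ J2) d y then (1:ℝ) else 0) * (eind J1 y z * eind J2 y z')
        = if y = y₀ then 1 else 0 := by
    intro y
    by_cases hy : y = y₀
    · obtain ⟨h0, h1, h2⟩ := (key y).mpr hy
      rw [if_pos h0, if_pos hy]
      unfold eind
      rw [if_pos h1, if_pos h2]
      norm_num
    · rw [if_neg hy]
      have hn : ¬(y = patch (J1 ∪ J2) d y ∧ (∀ j ∈ J1, z j = y j) ∧ (∀ j ∈ J2, z' j = y j)) :=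
        fun h => hy ((key y).mp h)
      unfold eind
      split_ifs with hA hB hC
      · exact absurd ⟨hA, hB, hC⟩ hn
      all_goals norm_num
  rw [Finset.sum_congr rfl fun y _ => step y]
  simp

lemma sum_patch_single {ν : (∀ i, R i) → ℝ} (hsum : ∑ y, ν y = 1) (d : ∀ i, R i) (J : Set I) :
    ∑ y : ∀ i, R i, (if y = patch J d y then (1:ℝ) else 0) * gg ν J y = 1 := by
  have := fun z z' => sum_patch_pair (R := R) d (J1 := J) (J2 := (∅ : Set I))
    (Set.disjoint_empty J) z z'
  calc ∑ y : ∀ i, R i, (if y = patch J d y then (1:ℝ) else 0) * gg ν J y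
      = ∑ y : ∀ i, R i, ∑ z, ν z * ((if y = patch J d y then (1:ℝ) else 0) * eind J y z) := by
        refine Finset.sum_congr rfl fun y _ => ?_
        unfold gg; rw [Finset.mul_sum]; refine Finset.sum_congr rfl fun z _ => by ring
    _ = ∑ z, ν z * ∑ y : ∀ i, R i, (if y = patch J d y then (1:ℝ) else 0) * eind J y z := by
        rw [Finset.sum_comm]
        exact Finset.sum_congr rfl fun z _ => by rw [Finset.mul_sum]
    _ = 1 := by
        have h1 : ∀ z : ∀ i, R i,
            ∑ y : ∀ i, R i, (if y = patch J d y then (1:ℝ) else 0) * eind J y z = 1 := by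
          intro z
          have := this z z
          simpa [eind_empty, Set.union_empty] using this
        rw [Finset.sum_congr rfl fun z _ => by rw [h1 z]]
        simpa using hsum

lemma sum_patch_prod {ν : (∀ i, R i) → ℝ} (hsum : ∑ y, ν y = 1) (d : ∀ i, R i)
    {J1 J2 : Set I} (hd : Disjoint J1 J2) :
    ∑ y : ∀ i, R i, (if y = patch (J1 ∪ J2) d y then (1:ℝ) else 0) *
      (gg ν J1 y * gg ν J2 y) = 1 := by
  calc ∑ y : ∀ i, R i, (if y = patch (J1 ∪ J2) d y then (1:ℝ) else 0) * (gg ν J1 y * gg ν J2 y)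
      = ∑ y : ∀ i, R i, ∑ z, ∑ z', (ν z * ν z') *
          ((if y = patch (J1 ∪ J2) d y then (1:ℝ) else 0) * (eind J1 y z * eind J2 y z')) := by
        refine Finset.sum_congr rfl fun y _ => ?_
        unfold gg
        rw [Finset.sum_mul_sum, Finset.mul_sum]
        refine Finset.sum_congr rfl fun z _ => ?_
        rw [Finset.mul_sum]
        exact Finset.sum_congr rfl fun z' _ => by ring
    _ = ∑ z, ∑ z', (ν z * ν z') * ∑ y : ∀ i, R i,
          ((if y = patch (J1 ∪ J2) d y then (1:ℝ) else 0) * (eind J1 y z * eind J2 y z')) := by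
        rw [Finset.sum_comm]
        refine Finset.sum_congr rfl fun z _ => ?_
        rw [Finset.sum_comm]
        exact Finset.sum_congr rfl fun z' _ => by rw [Finset.mul_sum]
    _ = 1 := by
        rw [Finset.sum_congr rfl fun z _ => Finset.sum_congr rfl fun z' _ => by
          rw [sum_patch_pair d hd z z', mul_one]]
        rw [← Finset.sum_mul_sum, hsum, mul_one]


lemma collapse {ν : (∀ i, R i) → ℝ} {C B : Set I} (hCB : C ⊆ B) (d x : ∀ i, R i) :
    ∑ a : ∀ i, R i, (∑ y : ∀ i, R i, ν y * (if a = patch B d y then (1:ℝ) else 0)) *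
      eind C x a = gg ν C x := by
  calc ∑ a : ∀ i, R i, (∑ y : ∀ i, R i, ν y * (if a = patch B d y then (1:ℝ) else 0)) *
        eind C x a
      = ∑ a : ∀ i, R i, ∑ y : ∀ i, R i,
          ν y * ((if a = patch B d y then (1:ℝ) else 0) * eind C x a) := by
        refine Finset.sum_congr rfl fun a _ => ?_
        rw [Finset.sum_mul]
        exact Finset.sum_congr rfl fun y _ => by ring
    _ = ∑ y : ∀ i, R i, ν y * ∑ a : ∀ i, R i,
          (if a = patch B d y then (1:ℝ) else 0) * eind C x a := by
        rw [Finset.sum_comm]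
        exact Finset.sum_congr rfl fun y _ => by rw [Finset.mul_sum]
    _ = gg ν C x := by
        unfold gg
        refine Finset.sum_congr rfl fun y _ => ?_
        congr 1
        rw [Finset.sum_eq_single (patch B d y)]
        · rw [if_pos rfl, one_mul, eind_patch hCB]
        · intro a _ hne; rw [if_neg hne, zero_mul]
        · intro h; exact absurd (Finset.mem_univ _) h

/-- If the joint family of two independent blocks factorizes, so does every
pair of sub-blocks. -/
lemma gg_subset_resp {ν : (∀ i, R i) → ℝ} (d : ∀ i, R i) {B1 B2 C1 C2 : Set I}
    (hB : Disjoint B1 B2) (h1 : C1 ⊆ B1) (h2 : C2 ⊆ B2)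
    (hresp : ∀ x, gg ν (B1 ∪ B2) x = gg ν B1 x * gg ν B2 x) :
    ∀ x, gg ν (C1 ∪ C2) x = gg ν C1 x * gg ν C2 x := by
  intro x
  have inner : ∀ a b : ∀ i, R i,
      (∑ w : ∀ i, R i, ν w * ((if a = patch B1 d w then (1:ℝ) else 0) *
        (if b = patch B2 d w then (1:ℝ) else 0)))
      = (∑ y : ∀ i, R i, ν y * (if a = patch B1 d y then (1:ℝ) else 0)) *
        (∑ z : ∀ i, R i, ν z * (if b = patch B2 d z then (1:ℝ) else 0)) := by
    intro a b
    by_cases ha : a = patch B1 d a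
    · by_cases hb : b = patch B2 d b
      · have ea : ∀ w : ∀ i, R i,
            (if a = patch B1 d w then (1:ℝ) else 0) = eind B1 a w := by
          intro w
          unfold eind
          congr 1
          simp only [eq_iff_iff]
          constructor
          · intro h
            intro j hj
            have := congrFun h j
            simp [patch, hj] at this
            exact this.symm
          · intro h
            funext i
            by_cases hi : i ∈ B1
            · simp [patch, hi, (h i hi).symm]
            · have := congrFun ha i
              simp [patch, hi] at this ⊢
              exact this
        have eb : ∀ w : ∀ i, R i,
            (if b = patch B2 d w then (1:ℝ) else 0) = eind B2 b w := by
          intro w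
          unfold eind
          congr 1
          simp only [eq_iff_iff]
          constructor
          · intro h
            intro j hj
            have := congrFun h j
            simp [patch, hj] at this
            exact this.symm
          · intro h
            funext i
            by_cases hi : i ∈ B2
            · simp [patch, hi, (h i hi).symm]
            · have := congrFun hb i
              simp [patch, hi] at this ⊢
              exact this
        set x' : ∀ i, R i := fun i => if i ∈ B1 then a i else b i with hx'
        have ca : ∀ j ∈ B1, a j = x' j := fun j hj => by simp [hx', hj]
        have cb : ∀ j ∈ B2, b j = x' j := fun j hj => by
          have : j ∉ B1 := fun hj1 => (Set.disjoint_left.mp hB hj1) hj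
          simp [hx', this]
        calc (∑ w : ∀ i, R i, ν w * ((if a = patch B1 d w then (1:ℝ) else 0) *
                (if b = patch B2 d w then (1:ℝ) else 0)))
            = ∑ w : ∀ i, R i, ν w * eind (B1 ∪ B2) x' w := by
              refine Finset.sum_congr rfl fun w _ => ?_
              rw [ea w, eb w, eind_union, eind_congr_left ca, eind_congr_left cb]
          _ = gg ν (B1 ∪ B2) x' := rfl
          _ = gg ν B1 x' * gg ν B2 x' := hresp x'
          _ = gg ν B1 a * gg ν B2 b := by rw [← gg_congr ca, ← gg_congr cb]
          _ = _ := by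
              unfold gg
              congr 1
              · exact Finset.sum_congr rfl fun y _ => by rw [ea y]
              · exact Finset.sum_congr rfl fun z _ => by rw [eb z]
      · have zb : ∀ w : ∀ i, R i, (if b = patch B2 d w then (1:ℝ) else 0) = 0 := by
          intro w
          rw [if_neg]
          intro h
          exact hb (by rw [h, patch_idem])
        simp [zb]
    · have za : ∀ w : ∀ i, R i, (if a = patch B1 d w then (1:ℝ) else 0) = 0 := by
        intro w
        rw [if_neg]
        intro h
        exact ha (by rw [h, patch_idem])
      simp [za]
  calc gg ν (C1 ∪ C2) x
      = ∑ w : ∀ i, R i, ν w * (eind C1 x (patch B1 d w) * eind C2 x (patch B2 d w)) := by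
        unfold gg
        refine Finset.sum_congr rfl fun w _ => ?_
        rw [eind_union, eind_patch h1, eind_patch h2]
    _ = ∑ w : ∀ i, R i, ∑ a : ∀ i, R i, ∑ b : ∀ i, R i,
          (ν w * ((if a = patch B1 d w then (1:ℝ) else 0) *
            (if b = patch B2 d w then (1:ℝ) else 0))) * (eind C1 x a * eind C2 x b) := by
        refine Finset.sum_congr rfl fun w _ => ?_
        have hA : ∑ a : ∀ i, R i, (if a = patch B1 d w then (1:ℝ) else 0) * eind C1 x a
            = eind C1 x (patch B1 d w) := by
          rw [Finset.sum_eq_single (patch B1 d w)]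
          · simp
          · intro a _ hne; rw [if_neg hne, zero_mul]
          · intro h; exact absurd (Finset.mem_univ _) h
        have hB2 : ∑ b : ∀ i, R i, (if b = patch B2 d w then (1:ℝ) else 0) * eind C2 x b
            = eind C2 x (patch B2 d w) := by
          rw [Finset.sum_eq_single (patch B2 d w)]
          · simp
          · intro b _ hne; rw [if_neg hne, zero_mul]
          · intro h; exact absurd (Finset.mem_univ _) h
        rw [← hA, ← hB2]
        rw [Finset.sum_mul_sum, Finset.mul_sum]
        refine Finset.sum_congr rfl fun a _ => ?_
        rw [Finset.mul_sum]
        refine Finset.sum_congr rfl fun b _ => by ring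
    _ = ∑ a : ∀ i, R i, ∑ b : ∀ i, R i,
          (∑ w : ∀ i, R i, ν w * ((if a = patch B1 d w then (1:ℝ) else 0) *
            (if b = patch B2 d w then (1:ℝ) else 0))) * (eind C1 x a * eind C2 x b) := by
        rw [Finset.sum_comm]
        refine Finset.sum_congr rfl fun a _ => ?_
        rw [Finset.sum_comm]
        refine Finset.sum_congr rfl fun b _ => ?_
        rw [Finset.sum_mul]
    _ = ∑ a : ∀ i, R i, ∑ b : ∀ i, R i,
          ((∑ y : ∀ i, R i, ν y * (if a = patch B1 d y then (1:ℝ) else 0)) * eind C1 x a) *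
          ((∑ z : ∀ i, R i, ν z * (if b = patch B2 d z then (1:ℝ) else 0)) * eind C2 x b) := by
        refine Finset.sum_congr rfl fun a _ => Finset.sum_congr rfl fun b _ => ?_
        rw [inner a b]; ring
    _ = (∑ a : ∀ i, R i, (∑ y : ∀ i, R i, ν y * (if a = patch B1 d y then (1:ℝ) else 0)) *
          eind C1 x a) *
        (∑ b : ∀ i, R i, (∑ z : ∀ i, R i, ν z * (if b = patch B2 d z then (1:ℝ) else 0)) *
          eind C2 x b) := by
        rw [Finset.sum_mul_sum]
    _ = gg ν C1 x * gg ν C2 x := by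
        rw [collapse h1 d x, collapse h2 d x]


/-- Cancellation: if the tensor with a normalized family factorizes, so does
the first factor. -/
lemma cancel {S : I → Type} [∀ i, Fintype (S i)]
    {ν : (∀ i, R i) → ℝ} {μ : (∀ i, S i) → ℝ} (d : ∀ i, S i)
    (hμ : ∑ y, μ y = 1) {J1 J2 : Set I} (hd : Disjoint J1 J2)
    (H : ∀ (x : ∀ i, R i) (y : ∀ i, S i),
      gg ν (J1 ∪ J2) x * gg μ (J1 ∪ J2) y =
        (gg ν J1 x * gg ν J2 x) * (gg μ J1 y * gg μ J2 y)) :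
    ∀ x, gg ν (J1 ∪ J2) x = gg ν J1 x * gg ν J2 x := by
  intro x
  have h1 : ∑ y : ∀ i, S i,
      (if y = patch (J1 ∪ J2) d y then (1:ℝ) else 0) * gg μ (J1 ∪ J2) y = 1 :=
    sum_patch_single hμ d (J1 ∪ J2)
  have h2 : ∑ y : ∀ i, S i,
      (if y = patch (J1 ∪ J2) d y then (1:ℝ) else 0) * (gg μ J1 y * gg μ J2 y) = 1 :=
    sum_patch_prod hμ d hd
  calc gg ν (J1 ∪ J2) x
      = gg ν (J1 ∪ J2) x * ∑ y : ∀ i, S i,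
          (if y = patch (J1 ∪ J2) d y then (1:ℝ) else 0) * gg μ (J1 ∪ J2) y := by
        rw [h1, mul_one]
    _ = ∑ y : ∀ i, S i, (if y = patch (J1 ∪ J2) d y then (1:ℝ) else 0) *
          (gg ν (J1 ∪ J2) x * gg μ (J1 ∪ J2) y) := by
        rw [Finset.mul_sum]
        exact Finset.sum_congr rfl fun y _ => by ring
    _ = ∑ y : ∀ i, S i, (if y = patch (J1 ∪ J2) d y then (1:ℝ) else 0) *
          ((gg ν J1 x * gg ν J2 x) * (gg μ J1 y * gg μ J2 y)) := by
        exact Finset.sum_congr rfl fun y _ => by rw [H x y]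
    _ = (gg ν J1 x * gg ν J2 x) * ∑ y : ∀ i, S i,
          (if y = patch (J1 ∪ J2) d y then (1:ℝ) else 0) * (gg μ J1 y * gg μ J2 y) := by
        rw [Finset.mul_sum]
        exact Finset.sum_congr rfl fun y _ => by ring
    _ = gg ν J1 x * gg ν J2 x := by rw [h2, mul_one]


end Abstract

section Bridge
variable {I : Type u} [Fintype I]

open scoped Classical

lemma RandomFamily.nonempty_Ω (φ : RandomFamily I) : Nonempty φ.Ω := by
  by_contra h
  rw [not_nonempty_iff] at h
  have := φ.P_total
  rw [Finset.univ_eq_empty, Finset.sum_empty] at this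
  norm_num at this

lemma RandomFamily.nonempty_R (φ : RandomFamily I) (i : I) : Nonempty (φ.R i) :=
  let ⟨ω⟩ := φ.nonempty_Ω; ⟨φ.X i ω⟩

/-- the weight of a full pattern -/
noncomputable def nuF (φ : RandomFamily I) : (∀ i, φ.R i) → ℝ :=
  fun y => φ.probEq Set.univ y

lemma probEq_eq_gg (φ : RandomFamily I) (J : Set I) (x : ∀ i, φ.R i) :
    φ.probEq J x = gg (nuF φ) J x := by
  unfold gg nuF RandomFamily.probEq RandomFamily.prob
  simp only [Set.indicator_apply, Set.mem_setOf_eq, Set.mem_univ, forall_true_left]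
  symm
  calc ∑ y : ∀ i, φ.R i, (∑ ω, if ∀ j, φ.X j ω = y j then φ.P ω else 0) * eind J x y
      = ∑ y : ∀ i, φ.R i, ∑ ω, (if ∀ j, φ.X j ω = y j then φ.P ω else 0) * eind J x y := by
        exact Finset.sum_congr rfl fun y _ => by rw [Finset.sum_mul]
    _ = ∑ ω, ∑ y : ∀ i, φ.R i, (if ∀ j, φ.X j ω = y j then φ.P ω else 0) * eind J x y :=
        Finset.sum_comm
    _ = ∑ ω, if ∀ j ∈ J, φ.X j ω = x j then φ.P ω else 0 := by
        refine Finset.sum_congr rfl fun ω _ => ?_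
        rw [Finset.sum_eq_single (fun i => φ.X i ω)]
        · rw [if_pos fun j => rfl]
          unfold eind
          rw [mul_ite, mul_one, mul_zero]
        · intro y _ hne
          rw [if_neg, zero_mul]
          intro h
          exact hne (funext fun i => (h i).symm)
        · intro h; exact absurd (Finset.mem_univ _) h

lemma probEq_empty (φ : RandomFamily I) (x : ∀ i, φ.R i) :
    φ.probEq (∅ : Set I) x = 1 := by
  unfold RandomFamily.probEq RandomFamily.prob
  have h : {ω : φ.Ω | ∀ j ∈ (∅ : Set I), φ.X j ω = x j} = Set.univ := by ext; simp
  rw [h]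
  simp only [Set.indicator_univ]
  exact φ.P_total

lemma nuF_sum (φ : RandomFamily I) : ∑ y, nuF φ y = 1 := by
  have x0 : ∀ i, φ.R i := fun i => Classical.choice (φ.nonempty_R i)
  calc ∑ y, nuF φ y = ∑ y, nuF φ y * eind (∅ : Set I) x0 y := by
        exact Finset.sum_congr rfl fun y _ => by rw [eind_empty, mul_one]
    _ = gg (nuF φ) (∅ : Set I) x0 := rfl
    _ = φ.probEq ∅ x0 := (probEq_eq_gg φ ∅ x0).symm
    _ = 1 := probEq_empty φ x0

lemma respects_iff_gg (φ : RandomFamily I) (J1 J2 : Set I) :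
    φ.Respects J1 J2 ↔
      ∀ x, gg (nuF φ) (J1 ∪ J2) x = gg (nuF φ) J1 x * gg (nuF φ) J2 x := by
  unfold RandomFamily.Respects
  constructor <;> intro h x <;>
    [rw [← probEq_eq_gg, ← probEq_eq_gg, ← probEq_eq_gg]; rw [probEq_eq_gg, probEq_eq_gg,
      probEq_eq_gg]] <;> exact h x

lemma respects_empty_left (φ : RandomFamily I) (C : Set I) :
    φ.Respects (∅ : Set I) C := by
  intro x
  rw [Set.empty_union, probEq_empty, one_mul]

lemma respects_empty_right (φ : RandomFamily I) (C : Set I) :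
    φ.Respects C (∅ : Set I) := by
  intro x
  rw [Set.union_empty, probEq_empty, mul_one]

lemma tensor_probEq (φ ψ : RandomFamily I) (J : Set I)
    (x : ∀ i, (φ.tensor ψ).R i) :
    (φ.tensor ψ).probEq J x =
      φ.probEq J (fun i => (x i).1) * ψ.probEq J (fun i => (x i).2) := by
  unfold RandomFamily.probEq RandomFamily.prob RandomFamily.tensor
  simp only [Set.indicator_apply, Set.mem_setOf_eq, Prod.ext_iff]
  rw [Fintype.sum_prod_type]
  rw [Finset.sum_mul_sum]
  refine Finset.sum_congr rfl fun ω _ => Finset.sum_congr rfl fun ξ _ => ?_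
  simp only []
  have : (∀ j ∈ J, φ.X j ω = (x j).1 ∧ ψ.X j ξ = (x j).2) ↔
      ((∀ j ∈ J, φ.X j ω = (x j).1) ∧ (∀ j ∈ J, ψ.X j ξ = (x j).2)) := by
    constructor
    · intro h; exact ⟨fun j hj => (h j hj).1, fun j hj => (h j hj).2⟩
    · intro h j hj; exact ⟨h.1 j hj, h.2 j hj⟩
  rw [if_congr ((forall₂_congr fun j _ => (Prod.ext_iff :
    ((φ.X j ω, ψ.X j ξ) : φ.R j × ψ.R j) = x j ↔ _)).trans this) rfl rfl]
  split_ifs with h1 h2 h3 <;> simp_all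

lemma tensor_respects_of {φ ψ : RandomFamily I} {J1 J2 : Set I}
    (hφ : φ.Respects J1 J2) (hψ : ψ.Respects J1 J2) :
    (φ.tensor ψ).Respects J1 J2 := by
  intro x
  rw [tensor_probEq, tensor_probEq, tensor_probEq, hφ _, hψ _]
  ring

lemma respects_of_tensor {φ ψ : RandomFamily I} {J1 J2 : Set I}
    (hd : Disjoint J1 J2) (ht : (φ.tensor ψ).Respects J1 J2) :
    φ.Respects J1 J2 := by
  rw [respects_iff_gg]
  have d : ∀ i, ψ.R i := fun i => Classical.choice (ψ.nonempty_R i)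
  refine cancel (μ := nuF ψ) d (nuF_sum ψ) hd ?_
  intro x y
  have := (tensor_probEq φ ψ (J1 ∪ J2) (fun i => (x i, y i))).symm.trans
    ((ht (fun i => (x i, y i))).trans (congrArg₂ (· * ·) (tensor_probEq φ ψ J1 _)
      (tensor_probEq φ ψ J2 _)))
  dsimp only at this
  rw [probEq_eq_gg, probEq_eq_gg, probEq_eq_gg, probEq_eq_gg, probEq_eq_gg,
    probEq_eq_gg] at this
  rw [this]
  ring

/-- Key structural lemma: a non-respected dissociation is contested by a
member of `K_χ`. -/
lemma exists_contest (χ : RandomFamily I) {J1 J2 : Set I} (hd : Disjoint J1 J2)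
    (hnr : ¬ χ.Respects J1 J2) : ∃ A ∈ χ.Kconn, Contests A J1 J2 := by
  have d : ∀ i, χ.R i := fun i => Classical.choice (χ.nonempty_R i)
  set S : Set (Set I) := {B | B ⊆ J1 ∪ J2 ∧ ¬ χ.Respects (B ∩ J1) (B ∩ J2)} with hS
  have hJS : (J1 ∪ J2) ∈ S := by
    refine ⟨subset_rfl, ?_⟩
    rwa [Set.union_inter_cancel_left, Set.union_inter_cancel_right]
  obtain ⟨B, hBS, hBmin⟩ := Set.Finite.exists_minimalFor Set.ncard S (Set.toFinite S)
    ⟨_, hJS⟩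
  obtain ⟨hBsub, hBnr⟩ := hBS
  have hmin : ∀ B' ∈ S, B' ⊆ B → B' = B := by
    intro B' hB' hsub
    by_contra hne
    have hlt : B'.ncard < B.ncard := Set.ncard_lt_ncard ⟨hsub, fun h => hne
      (Set.Subset.antisymm hsub h)⟩ (Set.toFinite B)
    have := hBmin hB' hlt.le
    omega
  have hne1 : (B ∩ J1).Nonempty := by
    by_contra h
    rw [Set.not_nonempty_iff_eq_empty] at h
    exact hBnr (h ▸ respects_empty_left χ (B ∩ J2))
  have hne2 : (B ∩ J2).Nonempty := by
    by_contra h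
    rw [Set.not_nonempty_iff_eq_empty] at h
    exact hBnr (h ▸ respects_empty_right χ (B ∩ J1))
  refine ⟨B, ?_, hBsub, hne1, hne2⟩
  intro B1 B2 hdis hresp
  obtain ⟨hn1, hn2, hdj, huni⟩ := hdis
  have hB1B : B1 ⊆ B := huni ▸ Set.subset_union_left
  have hB2B : B2 ⊆ B := huni ▸ Set.subset_union_right
  have hB1ne : B1 ≠ B := by
    intro h
    obtain ⟨i, hi⟩ := hn2
    exact Set.disjoint_right.mp hdj hi (h ▸ hB2B hi)
  have hB2ne : B2 ≠ B := by
    intro h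
    obtain ⟨i, hi⟩ := hn1
    exact Set.disjoint_left.mp hdj hi (h ▸ hB1B hi)
  have hr1 : χ.Respects (B1 ∩ J1) (B1 ∩ J2) := by
    by_contra h
    exact hB1ne (hmin B1 ⟨hB1B.trans hBsub, h⟩ hB1B)
  have hr2 : χ.Respects (B2 ∩ J1) (B2 ∩ J2) := by
    by_contra h
    exact hB2ne (hmin B2 ⟨hB2B.trans hBsub, h⟩ hB2B)
  -- derive that χ respects (B ∩ J1, B ∩ J2), contradiction
  apply hBnr
  rw [respects_iff_gg] at hresp hr1 hr2 ⊢
  have e0 : B ∩ J1 ∪ B ∩ J2 = B := by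
    rw [← Set.inter_union_distrib_left]
    exact Set.inter_eq_left.mpr hBsub
  have e1 : B1 ∩ J1 ∪ B1 ∩ J2 = B1 := by
    rw [← Set.inter_union_distrib_left]
    exact Set.inter_eq_left.mpr (hB1B.trans hBsub)
  have e2 : B2 ∩ J1 ∪ B2 ∩ J2 = B2 := by
    rw [← Set.inter_union_distrib_left]
    exact Set.inter_eq_left.mpr (hB2B.trans hBsub)
  have e3 : B ∩ J1 = B1 ∩ J1 ∪ B2 ∩ J1 := by
    rw [← huni, Set.union_inter_distrib_right]
  have e4 : B ∩ J2 = B1 ∩ J2 ∪ B2 ∩ J2 := by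
    rw [← huni, Set.union_inter_distrib_right]
  have g1 : ∀ x, gg (nuF χ) (B1 ∩ J1 ∪ B2 ∩ J1) x =
      gg (nuF χ) (B1 ∩ J1) x * gg (nuF χ) (B2 ∩ J1) x :=
    gg_subset_resp d hdj Set.inter_subset_left Set.inter_subset_left hresp
  have g2 : ∀ x, gg (nuF χ) (B1 ∩ J2 ∪ B2 ∩ J2) x =
      gg (nuF χ) (B1 ∩ J2) x * gg (nuF χ) (B2 ∩ J2) x :=
    gg_subset_resp d hdj Set.inter_subset_left Set.inter_subset_left hresp
  intro x
  have hx1 := hr1 x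
  have hx2 := hr2 x
  rw [e1] at hx1
  rw [e2] at hx2
  calc gg (nuF χ) (B ∩ J1 ∪ B ∩ J2) x
      = gg (nuF χ) (B1 ∪ B2) x := by rw [e0, huni]
    _ = gg (nuF χ) B1 x * gg (nuF χ) B2 x := hresp x
    _ = (gg (nuF χ) (B1 ∩ J1) x * gg (nuF χ) (B1 ∩ J2) x) *
        (gg (nuF χ) (B2 ∩ J1) x * gg (nuF χ) (B2 ∩ J2) x) := by rw [← hx1, ← hx2]
    _ = (gg (nuF χ) (B1 ∩ J1) x * gg (nuF χ) (B2 ∩ J1) x) *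
        (gg (nuF χ) (B1 ∩ J2) x * gg (nuF χ) (B2 ∩ J2) x) := by ring
    _ = gg (nuF χ) (B ∩ J1) x * gg (nuF χ) (B ∩ J2) x := by
        rw [e3, e4, g1 x, g2 x]

/-- A set all of whose dissociations are contested by members of a
connectivity structure belongs to the structure. -/
lemma mem_of_contests {𝒦 : Set (Set I)} (h𝒦 : IsConnectivity 𝒦) {J : Set I}
    (hJ : ∀ J1 J2 : Set I, IsDissociation J J1 J2 → ∃ A ∈ 𝒦, Contests A J1 J2) :
    J ∈ 𝒦 := by
  rcases Set.eq_empty_or_nonempty J with rfl | ⟨i, hi⟩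
  · exact h𝒦.1
  set S : Set (Set I) := {K | K ∈ 𝒦 ∧ K ⊆ J ∧ K.Nonempty} with hS
  have hiS : ({i} : Set I) ∈ S :=
    ⟨h𝒦.2.1 i, Set.singleton_subset_iff.mpr hi, Set.singleton_nonempty i⟩
  obtain ⟨K, hKS, hKmax⟩ := Set.Finite.exists_maximalFor Set.ncard S (Set.toFinite S)
    ⟨_, hiS⟩
  obtain ⟨hK𝒦, hKJ, hKne⟩ := hKS
  by_cases hKeq : K = J
  · exact hKeq ▸ hK𝒦
  have hdiff : (J \ K).Nonempty := by
    rw [Set.diff_nonempty]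
    intro h
    exact hKeq (Set.Subset.antisymm hKJ h)
  obtain ⟨A, hA𝒦, hAsub, hAK, hAD⟩ := hJ K (J \ K)
    ⟨hKne, hdiff, Set.disjoint_sdiff_right, Set.union_diff_cancel hKJ⟩
  have hKA : K ∪ A ∈ 𝒦 := h𝒦.2.2 K A hK𝒦 hA𝒦 (by
    obtain ⟨a, ha⟩ := hAK
    exact ⟨a, ha.2, ha.1⟩)
  have hKAS : K ∪ A ∈ S := by
    refine ⟨hKA, ?_, hKne.mono Set.subset_union_left⟩
    rw [Set.union_diff_cancel hKJ] at hAsub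
    exact Set.union_subset hKJ hAsub
  have hlt : K.ncard < (K ∪ A).ncard := by
    apply Set.ncard_lt_ncard _ (Set.toFinite _)
    refine ⟨Set.subset_union_left, fun h => ?_⟩
    obtain ⟨a, haA, haD⟩ := hAD
    exact haD.2 (h (Set.mem_union_right K haA))
  have := hKmax hKAS hlt.le
  omega

end Bridge

/-- if `𝒦₁ ⊆ K_φ ⊆ 𝒦₂` and `𝒦₁ ⊆ K_ψ ⊆ 𝒦₂` for integral connectivity
structures `𝒦₁, 𝒦₂`, then `𝒦₁ ⊆ K_{φ⊗ψ} ⊆ 𝒦₂`. -/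
theorem stmt16 {I : Type u} [Fintype I] [Nonempty I] (𝒦₁ 𝒦₂ : Set (Set I))
    (h₁ : IsConnectivity 𝒦₁) (h₂ : IsConnectivity 𝒦₂) (φ ψ : RandomFamily I)
    (hφ₁ : 𝒦₁ ⊆ φ.Kconn) (hφ₂ : φ.Kconn ⊆ 𝒦₂)
    (hψ₁ : 𝒦₁ ⊆ ψ.Kconn) (hψ₂ : ψ.Kconn ⊆ 𝒦₂) :
    𝒦₁ ⊆ (φ.tensor ψ).Kconn ∧ (φ.tensor ψ).Kconn ⊆ 𝒦₂ := by
  constructor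
  · intro J hJ J1 J2 hdis hresp
    exact hφ₁ hJ J1 J2 hdis (respects_of_tensor hdis.2.2.1 hresp)
  · intro J hJ
    apply mem_of_contests h₂
    intro J1 J2 hdis
    have hnt : ¬ (φ.tensor ψ).Respects J1 J2 := hJ J1 J2 hdis
    have hor : ¬ φ.Respects J1 J2 ∨ ¬ ψ.Respects J1 J2 := by
      by_contra h
      push_neg at h
      exact hnt (tensor_respects_of h.1 h.2)
    rcases hor with h | h
    · obtain ⟨A, hA, hc⟩ := exists_contest φ hdis.2.2.1 h
      exact ⟨A, hφ₂ hA, hc⟩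
    · obtain ⟨A, hA, hc⟩ := exists_contest ψ hdis.2.2.1 h
      exact ⟨A, hψ₂ hA, hc⟩
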